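/- There exist a finite set 𝓕 ⊆ Γ/K × Γ/K and a map ω : 𝓕 → Γ/K such that: (i) a pair (g₀, g₁) ∈ Γ × Γ belongs to the image of ψ if and only if (π_K(g₀), π_K(g₁)) ∈ 𝓕; (ii) whenever (π_K(g₀), π_K(g₁)) ∈ 𝓕, every g ∈ St_Γ(1) with ψ(g) = (g₀, g₁) satisfies π_K(g) = ω(π_K(g₀), π_K(g₁)). -/

import Mathlib

set_option maxHeartbeats 1000000

attribute [local instance] Classical.propDecidable

noncomputable section

namespace Grig

/-! ### The Grigorchuk group -/

/-- The action of the generator `a` on vertices (finite binary words). -/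
def aFun : List Bool → List Bool
  | [] => []
  | x :: w => (!x) :: w

lemma aFun_invol : ∀ w, aFun (aFun w) = w := by
  intro w; cases w <;> simp [aFun]

/-- States of the automaton generating `b`, `c`, `d`. -/
inductive St | B | C | D

/-- The actions of `b`, `c`, `d` on vertices. -/
def stFun : St → List Bool → List Bool
  | _, [] => []
  | .B, false :: w => false :: aFun w
  | .B, true :: w => true :: stFun .C w
  | .C, false :: w => false :: aFun w
  | .C, true :: w => true :: stFun .D w
  | .D, false :: w => false :: w
  | .D, true :: w => true :: stFun .B w

lemma stFun_invol : ∀ (s : St) (w : List Bool), stFun s (stFun s w) = w := by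
  intro s w
  induction w generalizing s with
  | nil => cases s <;> rfl
  | cons x w ih => cases s <;> cases x <;> simp [stFun, aFun_invol, ih]

/-- The automorphism `a` of the binary rooted tree. -/
def a : Equiv.Perm (List Bool) := ⟨aFun, aFun, aFun_invol, aFun_invol⟩
/-- The automorphism `b`. -/
def b : Equiv.Perm (List Bool) := ⟨stFun .B, stFun .B, stFun_invol .B, stFun_invol .B⟩
/-- The automorphism `c`. -/
def c : Equiv.Perm (List Bool) := ⟨stFun .C, stFun .C, stFun_invol .C, stFun_invol .C⟩
/-- The automorphism `d`. -/
def d : Equiv.Perm (List Bool) := ⟨stFun .D, stFun .D, stFun_invol .D, stFun_invol .D⟩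

/-- The Grigorchuk group `Γ`, as the subgroup of the group of permutations of the
vertex set generated by the four automorphisms `a, b, c, d` (which indeed preserve word
length and initial segments, so `Γ` is a subgroup of `Aut(T)`). -/
def Grigorchuk : Subgroup (Equiv.Perm (List Bool)) := Subgroup.closure {a, b, c, d}

/-- `a` as an element of `Γ`. -/
def ga : Grigorchuk := ⟨a, Subgroup.subset_closure (by simp)⟩
/-- `b` as an element of `Γ`. -/
def gb : Grigorchuk := ⟨b, Subgroup.subset_closure (by simp)⟩
/-- `c` as an element of `Γ`. -/
def gc : Grigorchuk := ⟨c, Subgroup.subset_closure (by simp)⟩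
/-- `d` as an element of `Γ`. -/
def gd : Grigorchuk := ⟨d, Subgroup.subset_closure (by simp)⟩

/-- The first level stabilizer `St_Γ(1)` of `Γ`. -/
def St1 : Subgroup Grigorchuk where
  carrier := {g | (g : Equiv.Perm (List Bool)) [false] = [false] ∧
                  (g : Equiv.Perm (List Bool)) [true] = [true]}
  one_mem' := ⟨rfl, rfl⟩
  mul_mem' := by
    rintro g h ⟨hg1, hg2⟩ ⟨hh1, hh2⟩
    refine ⟨?_, ?_⟩ <;>
      simp only [Subgroup.coe_mul, Equiv.Perm.mul_apply, hh1, hh2, hg1, hg2]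
  inv_mem' := by
    rintro g ⟨hg1, hg2⟩
    refine ⟨?_, ?_⟩
    · conv_lhs => rw [← hg1]
      simp
    · conv_lhs => rw [← hg2]
      simp

/-- The subgroup `K`, the normal closure of `abab` in `Γ`. -/
def K : Subgroup Grigorchuk := Subgroup.normalClosure {ga * gb * ga * gb}

instance : K.Normal := Subgroup.normalClosure_normal

/-- The canonical projection `π_K : Γ → Γ/K`. -/
def piK : Grigorchuk →* Grigorchuk ⧸ K := QuotientGroup.mk' K

/-- `ψ_i(g)` (`i ∈ {0,1}`, encoded by `false`/`true`): the automorphism determined by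
`g(i·w) = i·ψ_i(g)(w)`, when it exists in `Γ` (it does for `g ∈ St_Γ(1)`);
junk value `1` otherwise. -/
def psiG (i : Bool) (g : Grigorchuk) : Grigorchuk :=
  if h : ∃ k : Grigorchuk, ∀ w : List Bool,
      (g : Equiv.Perm (List Bool)) (i :: w) = i :: (k : Equiv.Perm (List Bool)) w
  then h.choose else 1

/-- `ū`: the closest element of `St_Γ(1)`. -/
def bar (g : Grigorchuk) : Grigorchuk := if g ∈ St1 then g else g * ga

/-- The word length of `g ∈ Γ` with respect to the generating set `{a,b,c,d}`
(each generator is an involution, so inverses of generators are not needed). -/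
def wlen (g : Grigorchuk) : ℕ :=
  sInf {n | ∃ l : List Grigorchuk, l.length = n ∧
    (∀ x ∈ l, x ∈ ({ga, gb, gc, gd} : Set Grigorchuk)) ∧ l.prod = g}



/-! ### Words and equations over a group -/

/-- A letter: a constant from `G`, or a variable `x ∈ ℕ` with a sign
(`true` for `x`, `false` for `x⁻¹`). -/
abbrev Letter (G : Type*) := G ⊕ (ℕ × Bool)

/-- A word over `G` with variables: `W = u₁u₂⋯u_k`, `u_i ∈ G ∪ X^{±1}`. -/
abbrev Word (G : Type*) := List (Letter G)

variable {G : Type*} [Group G]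

/-- The constant letter. -/
def Cst (g : G) : Letter G := Sum.inl g
/-- The letter `x`. -/
def Vp {G : Type*} (x : ℕ) : Letter G := Sum.inr (x, true)
/-- The letter `x⁻¹`. -/
def Vm {G : Type*} (x : ℕ) : Letter G := Sum.inr (x, false)

/-- The element of the free product `G ∗ F_X` represented by a word. -/
def wordProd (W : Word G) : Monoid.Coprod G (FreeGroup ℕ) :=
  (W.map (fun u => match u with
    | Sum.inl g => Monoid.Coprod.inl g
    | Sum.inr (x, e) =>
        Monoid.Coprod.inr (if e then FreeGroup.of x else (FreeGroup.of x)⁻¹))).prod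

/-- Number of occurrences of the letter `x^ε` (`ε` given by `e`) in `W`. -/
def occ (W : Word G) (x : ℕ) (e : Bool) : ℕ :=
  W.countP (fun u => match u with
    | Sum.inr (y, f) => y == x && f == e
    | _ => false)

/-- Total number of occurrences of the variable `x` in `W` (occurrences of both
`x` and `x⁻¹` are counted). -/
def nocc (W : Word G) (x : ℕ) : ℕ := occ W x true + occ W x false

/-- `Var(W)`: the set of variables occurring in `W`. -/
def Vars (W : Word G) : Set ℕ := {x | nocc W x ≠ 0}

/-- A word is quadratic if every variable occurring in it occurs exactly twice. -/
def IsQuadratic (W : Word G) : Prop := ∀ x ∈ Vars W, nocc W x = 2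

/-- A word is orientable if every variable occurring in it occurs exactly once with
exponent `+1` and once with exponent `-1`. -/
def Orientable (W : Word G) : Prop := ∀ x ∈ Vars W, occ W x true = 1 ∧ occ W x false = 1

/-- Formal inverse of a word. -/
def wordInv (W : Word G) : Word G :=
  (W.map (fun u => match u with
    | Sum.inl g => Sum.inl g⁻¹
    | Sum.inr (x, e) => (Sum.inr (x, !e) : Letter G))).reverse

/-- The commutator word `[x,y] = x⁻¹y⁻¹xy`. -/
def comm {G : Type*} (x y : ℕ) : Word G := [Vm x, Vm y, Vp x, Vp y]
/-- The square word `x² = x·x`. -/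
def sq {G : Type*} (x : ℕ) : Word G := [Vp x, Vp x]
/-- The coefficient factor `z⁻¹cz`. -/
def cf (z : ℕ) (c : G) : Word G := [Vm z, Cst c, Vp z]

/-- Concatenation of a list of words. -/
def listJoin {α : Type*} (l : List (List α)) : List α := l.foldr (· ++ ·) []

/-- The commutator part `[x₁,y₁]⋯[x_g,y_g]`. -/
def commPart {G : Type*} (g : ℕ) (xs ys : Fin g → ℕ) : Word G :=
  listJoin (List.ofFn fun i => comm (xs i) (ys i))
/-- The square part `x₁²⋯x_g²`. -/
def sqPart {G : Type*} (g : ℕ) (xs : Fin g → ℕ) : Word G :=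
  listJoin (List.ofFn fun i => sq (xs i))
/-- The coefficient part `z₁⁻¹c₁z₁⋯z_m⁻¹c_mz_m`. -/
def coefPart (m : ℕ) (zs : Fin m → ℕ) (cs : Fin m → G) : Word G :=
  listJoin (List.ofFn fun i => cf (zs i) (cs i))

/-- The standard orientable quadratic word
`[x₁,y₁]⋯[x_g,y_g]·z₁⁻¹c₁z₁⋯z_m⁻¹c_mz_m`. -/
def stdOr (g m : ℕ) (xs ys : Fin g → ℕ) (zs : Fin m → ℕ) (cs : Fin m → G) : Word G :=
  commPart g xs ys ++ coefPart m zs cs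

/-- The standard non-orientable quadratic word
`x₁²⋯x_g²·z₁⁻¹c₁z₁⋯z_m⁻¹c_mz_m`. -/
def stdNonOr (g m : ℕ) (xs : Fin g → ℕ) (zs : Fin m → ℕ) (cs : Fin m → G) : Word G :=
  sqPart g xs ++ coefPart m zs cs

/-- The variables `x₁,…,x_g,y₁,…,y_g,z₁,…,z_m` are pairwise distinct. -/
def DistinctVars (g m : ℕ) (xs ys : Fin g → ℕ) (zs : Fin m → ℕ) : Prop :=
  Function.Injective (fun p : (Fin g ⊕ Fin g) ⊕ Fin m =>
    match p with
    | Sum.inl (Sum.inl i) => xs i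
    | Sum.inl (Sum.inr i) => ys i
    | Sum.inr i => zs i)

/-- The variables `x₁,…,x_g,z₁,…,z_m` are pairwise distinct. -/
def DistinctVarsN (g m : ℕ) (xs : Fin g → ℕ) (zs : Fin m → ℕ) : Prop :=
  Function.Injective (fun p : Fin g ⊕ Fin m =>
    match p with
    | Sum.inl i => xs i
    | Sum.inr i => zs i)

/-- `α : G ∗ F_X → G` is a `G`-homomorphism (identical on `G`). -/
def IsGHom (α : Monoid.Coprod G (FreeGroup ℕ) →* G) : Prop :=
  ∀ g : G, α (Monoid.Coprod.inl g) = g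

/-- The value of a homomorphism at a variable. -/
def xval (α : Monoid.Coprod G (FreeGroup ℕ) →* G) (x : ℕ) : G :=
  α (Monoid.Coprod.inr (FreeGroup.of x))

/-- The equation `W = 1` has a solution in `G`. -/
def Solvable (W : Word G) : Prop :=
  ∃ α : Monoid.Coprod G (FreeGroup ℕ) →* G, IsGHom α ∧ α (wordProd W) = 1

/-- The system of equations `{W = 1 | W ∈ Ws}` with constraint `γ` modulo `H`
has a solution in `G`. -/
def SolvableC (H : Subgroup G) [H.Normal] (Ws : List (Word G)) (γ : ℕ → G ⧸ H) : Prop :=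
  ∃ α : Monoid.Coprod G (FreeGroup ℕ) →* G, IsGHom α ∧
    (∀ W ∈ Ws, α (wordProd W) = 1) ∧
    ∀ x : ℕ, (∃ W ∈ Ws, x ∈ Vars W) → (QuotientGroup.mk' H) (xval α x) = γ x

/-- A finitely supported `G`-automorphism of `G ∗ F_X`. -/
def IsFinGAut (φ : Monoid.Coprod G (FreeGroup ℕ) ≃* Monoid.Coprod G (FreeGroup ℕ)) : Prop :=
  (∀ g : G, φ (Monoid.Coprod.inl g) = Monoid.Coprod.inl g) ∧
  {x : ℕ | φ (Monoid.Coprod.inr (FreeGroup.of x)) ≠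
      Monoid.Coprod.inr (FreeGroup.of x)}.Finite

/-- Two words are equivalent if some finitely supported `G`-automorphism sends (the
element of `G ∗ F_X` represented by) the first to a conjugate of the second. -/
def EquivWords (Wa Wb : Word G) : Prop :=
  ∃ φ : Monoid.Coprod G (FreeGroup ℕ) ≃* Monoid.Coprod G (FreeGroup ℕ),
    IsFinGAut φ ∧ IsConj (φ (wordProd Wa)) (wordProd Wb)

/-- The homomorphism `G ∗ F_X → G/H` extending a constraint `γ` (equal to `π_H` on `G`
and to `γ` on the variables). -/
def constraintHom (H : Subgroup G) [H.Normal] (γ : ℕ → G ⧸ H) :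
    Monoid.Coprod G (FreeGroup ℕ) →* G ⧸ H :=
  Monoid.Coprod.lift (QuotientGroup.mk' H) (FreeGroup.lift γ)

/-- Equivalence of constrained equations `(Wa = 1, γ)` and `(Wb = 1, ζ)`. -/
def EquivWordsC (H : Subgroup G) [H.Normal] (Wa : Word G) (γ : ℕ → G ⧸ H)
    (Wb : Word G) (ζ : ℕ → G ⧸ H) : Prop :=
  ∃ φ : Monoid.Coprod G (FreeGroup ℕ) ≃* Monoid.Coprod G (FreeGroup ℕ),
    IsFinGAut φ ∧ IsConj (φ (wordProd Wa)) (wordProd Wb) ∧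
    constraintHom H ζ = (constraintHom H γ).comp φ.toMonoidHom

/-- `W₁ #ₓ W₂`, for `W₁ = U₁ x^{ε₁} V₁` and `W₂ = U₂ x^{ε₂} V₂`:
the word `U₁ (V₂U₂)^{-ε₁ε₂} V₁`. -/
def joinAt (U₁ V₁ U₂ V₂ : Word G) (e₁ e₂ : Bool) : Word G :=
  U₁ ++ (if e₁ = e₂ then wordInv (V₂ ++ U₂) else V₂ ++ U₂) ++ V₁



/-! ### The splitting map `Ψ` for words over `Γ` -/

/-- The image `St_Γ(1)/K` in `Γ/K` (well defined since `K ⊆ St_Γ(1)`). -/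
def StQ : Subgroup (Grigorchuk ⧸ K) := St1.map (QuotientGroup.mk' K)

/-- The coset modulo `St_Γ(1)` of a letter, under the constraint `γ`
(`false` = trivial coset, `true` = nontrivial coset). -/
def letterBit (γ : ℕ → Grigorchuk ⧸ K) : Letter Grigorchuk → Bool
  | Sum.inl g => if g ∈ St1 then false else true
  | Sum.inr (x, _) => if γ x ∈ StQ then false else true

/-- `σ_γ(W)`: the coset modulo `St_Γ(1)` of a word, under the constraint `γ`
(`false` = trivial coset `1`). -/
def sigmaW (γ : ℕ → Grigorchuk ⧸ K) : Word Grigorchuk → Bool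
  | [] => false
  | u :: W => xor (letterBit γ u) (sigmaW γ W)

variable (d0 d1 : ℕ → ℕ)

/-- The descendant `x_j` of the variable `x` (given the two fixed injections). -/
def dsc (j : Bool) (x : ℕ) : ℕ := if j then d1 x else d0 x

/-- The letter of `Ψ_i(W)` replacing a letter of `W`, where `s` is the coset
`σ_γ(u₁⋯u_{i-1})` of the preceding prefix. -/
def psiLetter (γ : ℕ → Grigorchuk ⧸ K) (i : Bool) (s : Bool) :
    Letter Grigorchuk → Letter Grigorchuk
  | Sum.inl g => Sum.inl (if s then psiG i (ga * bar g * ga) else psiG i (bar g))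
  | Sum.inr (x, true) => Sum.inr (dsc d0 d1 (xor i s) x, true)
  | Sum.inr (x, false) =>
      Sum.inr (dsc d0 d1 (xor i (xor s (letterBit γ (Sum.inr (x, false))))) x, false)

/-- Auxiliary recursion for `Ψ_i`, carrying the coset of the processed prefix. -/
def psiGo (γ : ℕ → Grigorchuk ⧸ K) (i : Bool) : Bool → Word Grigorchuk → Word Grigorchuk
  | _, [] => []
  | s, u :: W => psiLetter d0 d1 γ i s u :: psiGo γ i (xor s (letterBit γ u)) W

/-- The splitting `Ψ_i(W)` of a word `W` with respect to the constraint `γ`. -/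
def PsiW (γ : ℕ → Grigorchuk ⧸ K) (i : Bool) (W : Word Grigorchuk) : Word Grigorchuk :=
  psiGo d0 d1 γ i false W

/-- `q̄` for `q ∈ Γ/K`: the closest element of `St_Γ(1)/K`. -/
def barQ (q : Grigorchuk ⧸ K) : Grigorchuk ⧸ K :=
  if q ∈ StQ then q else q * (QuotientGroup.mk' K ga)



/-! ### Auxiliary development for Proposition 2.3 -/

/-- Application of a product of elements of `Γ`. -/
lemma grig_coe_mul (g h : Grigorchuk) (v : List Bool) :
    ((g * h : Grigorchuk) : Equiv.Perm (List Bool)) v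
      = (g : Equiv.Perm (List Bool)) ((h : Equiv.Perm (List Bool)) v) := rfl

lemma grig_coe_inv (g : Grigorchuk) :
    ((g⁻¹ : Grigorchuk) : Equiv.Perm (List Bool))
      = ((g : Equiv.Perm (List Bool)))⁻¹ := rfl

/-- Induction principle for `Γ`. -/
lemma grig_induction {P : Grigorchuk → Prop} (h1 : P 1) (hA : P ga) (hB : P gb)
    (hC : P gc) (hD : P gd) (hmul : ∀ x y, P x → P y → P (x * y))
    (hinv : ∀ x, P x → P x⁻¹) : ∀ g : Grigorchuk, P g := by
  rintro ⟨g, hg⟩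
  refine Subgroup.closure_induction (p := fun x hx => P ⟨x, hx⟩) ?_ h1 ?_ ?_ hg
  · intro x hx
    simp only [Set.mem_insert_iff, Set.mem_singleton_iff] at hx
    rcases hx with rfl | rfl | rfl | rfl
    · exact hA
    · exact hB
    · exact hC
    · exact hD
  · intro x y hx hy px py; exact hmul ⟨x, hx⟩ ⟨y, hy⟩ px py
  · intro x hx px; exact hinv ⟨x, hx⟩ px

lemma ga_sq : ga * ga = 1 := Subtype.ext (Equiv.ext fun v => aFun_invol v)
lemma gb_sq : gb * gb = 1 := Subtype.ext (Equiv.ext fun v => stFun_invol .B v)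
lemma gc_sq : gc * gc = 1 := Subtype.ext (Equiv.ext fun v => stFun_invol .C v)
lemma gd_sq : gd * gd = 1 := Subtype.ext (Equiv.ext fun v => stFun_invol .D v)

lemma ga_inv : ga⁻¹ = ga := inv_eq_of_mul_eq_one_right ga_sq
lemma gb_inv : gb⁻¹ = gb := inv_eq_of_mul_eq_one_right gb_sq
lemma gc_inv : gc⁻¹ = gc := inv_eq_of_mul_eq_one_right gc_sq
lemma gd_inv : gd⁻¹ = gd := inv_eq_of_mul_eq_one_right gd_sq

lemma bcd_fun : ∀ w : List Bool,
    stFun .B (stFun .C w) = stFun .D w ∧ stFun .C (stFun .D w) = stFun .B w ∧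
    stFun .D (stFun .B w) = stFun .C w ∧ stFun .C (stFun .B w) = stFun .D w ∧
    stFun .D (stFun .C w) = stFun .B w ∧ stFun .B (stFun .D w) = stFun .C w := by
  intro w
  induction w with
  | nil => exact ⟨rfl, rfl, rfl, rfl, rfl, rfl⟩
  | cons x w ih =>
    obtain ⟨i1, i2, i3, i4, i5, i6⟩ := ih
    cases x <;> simp [stFun, aFun_invol, i1, i2, i3, i4, i5, i6]

lemma gb_gc : gb * gc = gd := Subtype.ext (Equiv.ext fun w => (bcd_fun w).1)
lemma gc_gd : gc * gd = gb := Subtype.ext (Equiv.ext fun w => (bcd_fun w).2.1)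
lemma gd_gb : gd * gb = gc := Subtype.ext (Equiv.ext fun w => (bcd_fun w).2.2.1)
lemma gc_gb : gc * gb = gd := Subtype.ext (Equiv.ext fun w => (bcd_fun w).2.2.2.1)
lemma gd_gc : gd * gc = gb := Subtype.ext (Equiv.ext fun w => (bcd_fun w).2.2.2.2.1)
lemma gb_gd : gb * gd = gc := Subtype.ext (Equiv.ext fun w => (bcd_fun w).2.2.2.2.2)

/-- The exact relation `(ad)² = (da)²` in `Γ`. -/
lemma adad_eq : ga * gd * ga * gd = gd * ga * gd * ga := by
  apply Subtype.ext; apply Equiv.ext; intro v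
  cases v with
  | nil => rfl
  | cons x w =>
    cases x
    · show false :: stFun .B w = false :: stFun .B w; rfl
    · show true :: stFun .B w = true :: stFun .B w; rfl

lemma grig_nil : ∀ g : Grigorchuk, (g : Equiv.Perm (List Bool)) [] = [] := by
  refine grig_induction rfl rfl rfl rfl rfl ?_ ?_
  · intro x y hx hy; rw [grig_coe_mul, hy, hx]
  · intro x hx
    rw [grig_coe_inv]
    conv_lhs => rw [← hx]
    exact Equiv.symm_apply_apply _ _

/-- The wreath recursion structure of elements of `Γ`. -/
lemma wreath : ∀ g : Grigorchuk, ∃ (s : Bool) (k0 k1 : Grigorchuk),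
    (∀ w, (g : Equiv.Perm (List Bool)) (false :: w)
        = s :: (k0 : Equiv.Perm (List Bool)) w) ∧
    (∀ w, (g : Equiv.Perm (List Bool)) (true :: w)
        = (!s) :: (k1 : Equiv.Perm (List Bool)) w) := by
  refine grig_induction ?_ ?_ ?_ ?_ ?_ ?_ ?_
  · exact ⟨false, 1, 1, fun w => rfl, fun w => rfl⟩
  · exact ⟨true, 1, 1, fun w => rfl, fun w => rfl⟩
  · exact ⟨false, ga, gc, fun w => rfl, fun w => rfl⟩
  · exact ⟨false, ga, gd, fun w => rfl, fun w => rfl⟩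
  · exact ⟨false, 1, gb, fun w => rfl, fun w => rfl⟩
  · rintro x y ⟨s, k0, k1, hx0, hx1⟩ ⟨t, l0, l1, hy0, hy1⟩
    refine ⟨xor t s, (cond t k1 k0) * l0, (cond t k0 k1) * l1, ?_, ?_⟩ <;>
      intro w <;> cases t <;>
      simp [grig_coe_mul, hx0, hx1, hy0, hy1]
  · rintro x ⟨s, k0, k1, hx0, hx1⟩
    refine ⟨s, (cond s k1 k0)⁻¹, (cond s k0 k1)⁻¹, ?_, ?_⟩ <;> intro w <;>
      apply (x : Equiv.Perm (List Bool)).injective <;> cases s <;>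
      simp [grig_coe_inv, hx0, hx1]

lemma apply_single (g : Grigorchuk) :
    ∃ s : Bool, ∀ x : Bool, (g : Equiv.Perm (List Bool)) [x] = [xor x s] := by
  obtain ⟨s, k0, k1, h0, h1⟩ := wreath g
  refine ⟨s, fun x => ?_⟩
  cases x
  · have := h0 []; rw [grig_nil] at this; simpa using this
  · have := h1 []; rw [grig_nil] at this; simpa using this

instance st1_normal : St1.Normal := by
  constructor
  intro n hn g
  obtain ⟨s, hs⟩ := apply_single g
  have hginv : ∀ y : Bool, ((g⁻¹ : Grigorchuk) : Equiv.Perm (List Bool)) [y] = [xor y s] := by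
    intro y
    rw [grig_coe_inv]
    apply (g : Equiv.Perm (List Bool)).injective
    rw [show (g : Equiv.Perm (List Bool)) ((g : Equiv.Perm (List Bool))⁻¹ [y]) = [y] from
      Equiv.apply_symm_apply _ _, hs (xor y s)]
    cases y <;> cases s <;> rfl
  have hn' : ∀ x : Bool, (n : Equiv.Perm (List Bool)) [x] = [x] := by
    intro x; cases x
    · exact hn.1
    · exact hn.2
  refine ⟨?_, ?_⟩
  · rw [grig_coe_mul, grig_coe_mul, hginv false, hn' _, hs _]
    cases s <;> rfl
  · rw [grig_coe_mul, grig_coe_mul, hginv true, hn' _, hs _]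
    cases s <;> rfl

lemma tEl_mem_K : ga * gb * ga * gb ∈ K :=
  Subgroup.subset_normalClosure rfl

lemma tEl_mem_St1 : ga * gb * ga * gb ∈ St1 := ⟨rfl, rfl⟩

lemma K_le_St1 : K ≤ St1 := by
  apply Subgroup.normalClosure_le_normal
  intro x hx
  rw [Set.mem_singleton_iff] at hx
  subst hx
  exact tEl_mem_St1

/-! ### The maps `ψ_i` -/

/-- The defining property of `ψ_i(g)`. -/
def HasPsi (i : Bool) (g k : Grigorchuk) : Prop :=
  ∀ w : List Bool, (g : Equiv.Perm (List Bool)) (i :: w)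
    = i :: (k : Equiv.Perm (List Bool)) w

lemma psiG_eq {i : Bool} {g k : Grigorchuk} (hk : HasPsi i g k) : psiG i g = k := by
  have hex : ∃ k' : Grigorchuk, ∀ w : List Bool,
      (g : Equiv.Perm (List Bool)) (i :: w) = i :: (k' : Equiv.Perm (List Bool)) w := ⟨k, hk⟩
  rw [psiG, dif_pos hex]
  have hspec := hex.choose_spec
  apply Subtype.ext; apply Equiv.ext; intro w
  have h1 := hspec w
  have h2 := hk w
  rw [h1] at h2
  exact (List.cons.injEq _ _ _ _ ▸ h2).2

lemma st1_hasPsi {g : Grigorchuk} (hg : g ∈ St1) :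
    ∃ k0 k1 : Grigorchuk, HasPsi false g k0 ∧ HasPsi true g k1 := by
  obtain ⟨s, k0, k1, h0, h1⟩ := wreath g
  have hs : s = false := by
    have := h0 []
    rw [grig_nil, hg.1] at this
    exact (List.cons.injEq _ _ _ _ ▸ this.symm).1
  subst hs
  exact ⟨k0, k1, h0, fun w => h1 w⟩

lemma psiG_spec {g : Grigorchuk} (hg : g ∈ St1) (i : Bool) : HasPsi i g (psiG i g) := by
  obtain ⟨k0, k1, h0, h1⟩ := st1_hasPsi hg
  cases i
  · rw [psiG_eq h0]; exact h0
  · rw [psiG_eq h1]; exact h1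

lemma mem_St1_of {g k0 k1 : Grigorchuk} (h0 : HasPsi false g k0) (h1 : HasPsi true g k1) :
    g ∈ St1 := by
  refine ⟨?_, ?_⟩
  · have := h0 []; rw [grig_nil] at this; exact this
  · have := h1 []; rw [grig_nil] at this; exact this

lemma psiG_one (i : Bool) : psiG i (1 : Grigorchuk) = 1 := psiG_eq fun w => rfl

lemma psiG_mul {g h : Grigorchuk} (hg : g ∈ St1) (hh : h ∈ St1) (i : Bool) :
    psiG i (g * h) = psiG i g * psiG i h := by
  refine psiG_eq fun w => ?_
  rw [grig_coe_mul, psiG_spec hh i w, psiG_spec hg i _, grig_coe_mul]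

lemma psiG_inv {g : Grigorchuk} (hg : g ∈ St1) (i : Bool) :
    psiG i g⁻¹ = (psiG i g)⁻¹ := by
  have h : psiG i g⁻¹ * psiG i g = 1 := by
    rw [← psiG_mul (inv_mem hg) hg, inv_mul_cancel, psiG_one]
  exact eq_inv_of_mul_eq_one_left h

lemma gb_mem : gb ∈ St1 := ⟨rfl, rfl⟩
lemma gc_mem : gc ∈ St1 := ⟨rfl, rfl⟩
lemma gd_mem : gd ∈ St1 := ⟨rfl, rfl⟩

lemma psiG_gb_f : psiG false gb = ga := psiG_eq fun w => rfl
lemma psiG_gb_t : psiG true gb = gc := psiG_eq fun w => rfl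
lemma psiG_gc_f : psiG false gc = ga := psiG_eq fun w => rfl
lemma psiG_gc_t : psiG true gc = gd := psiG_eq fun w => rfl
lemma psiG_gd_f : psiG false gd = 1 := psiG_eq fun w => rfl
lemma psiG_gd_t : psiG true gd = gb := psiG_eq fun w => rfl

lemma conj_hasPsi {g : Grigorchuk} (hg : g ∈ St1) (i : Bool) :
    HasPsi i (ga * g * ga) (psiG (!i) g) := by
  intro w
  rw [grig_coe_mul, grig_coe_mul]
  have ha : (ga : Equiv.Perm (List Bool)) (i :: w) = (!i) :: w := rfl
  rw [ha, psiG_spec hg (!i) w]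
  cases i <;> rfl

lemma conj_mem {g : Grigorchuk} (hg : g ∈ St1) : ga * g * ga ∈ St1 :=
  mem_St1_of (conj_hasPsi hg false) (conj_hasPsi hg true)

lemma psiG_conj {g : Grigorchuk} (hg : g ∈ St1) (i : Bool) :
    psiG i (ga * g * ga) = psiG (!i) g := psiG_eq (conj_hasPsi hg i)

lemma psi_inj {g : Grigorchuk} (hg : g ∈ St1) (h0 : psiG false g = 1)
    (h1 : psiG true g = 1) : g = 1 := by
  apply Subtype.ext; apply Equiv.ext; intro v
  cases v with
  | nil => exact grig_nil g
  | cons x w =>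
    cases x
    · have := psiG_spec hg false w; rw [h0] at this; exact this
    · have := psiG_spec hg true w; rw [h1] at this; exact this

lemma psi0_surj : ∀ g : Grigorchuk, ∃ h, h ∈ St1 ∧ psiG false h = g := by
  refine grig_induction ⟨1, one_mem _, psiG_one false⟩ ⟨gb, gb_mem, psiG_gb_f⟩
    ⟨ga * gd * ga, conj_mem gd_mem, by rw [psiG_conj gd_mem]; exact psiG_gd_t⟩
    ⟨ga * gb * ga, conj_mem gb_mem, by rw [psiG_conj gb_mem]; exact psiG_gb_t⟩
    ⟨ga * gc * ga, conj_mem gc_mem, by rw [psiG_conj gc_mem]; exact psiG_gc_t⟩ ?_ ?_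
  · rintro x y ⟨h, hh, rfl⟩ ⟨h', hh', rfl⟩
    exact ⟨h * h', mul_mem hh hh', psiG_mul hh hh' false⟩
  · rintro x ⟨h, hh, rfl⟩
    exact ⟨h⁻¹, inv_mem hh, psiG_inv hh false⟩

/-! ### The special element `w` with `ψ(w) = ((ab)², 1)` -/

lemma psiG_tEl_f : psiG false (ga * gb * ga * gb) = gc * ga := by
  rw [show ga * gb * ga * gb = (ga * gb * ga) * gb from rfl,
    psiG_mul (conj_mem gb_mem) gb_mem, psiG_conj gb_mem, psiG_gb_f,
    show (!false) = true from rfl, psiG_gb_t]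

lemma psiG_tEl_t : psiG true (ga * gb * ga * gb) = ga * gc := by
  rw [show ga * gb * ga * gb = (ga * gb * ga) * gb from rfl,
    psiG_mul (conj_mem gb_mem) gb_mem, psiG_conj gb_mem, psiG_gb_t,
    show (!true) = false from rfl, psiG_gb_f]

lemma psiG_ada_f : psiG false (ga * gd * ga) = gb := by
  rw [psiG_conj gd_mem]; exact psiG_gd_t

lemma psiG_ada_t : psiG true (ga * gd * ga) = 1 := by
  rw [psiG_conj gd_mem]; exact psiG_gd_f

/-- The special element `w = t⁻¹ (ada)⁻¹ t (ada)` where `t = abab`. -/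
noncomputable def wEl : Grigorchuk :=
  (ga * gb * ga * gb)⁻¹ * ((ga * gd * ga)⁻¹ * (ga * gb * ga * gb) * (ga * gd * ga))

lemma wEl_mem_K : wEl ∈ K := by
  refine mul_mem (inv_mem tEl_mem_K) ?_
  have := st1_normal  -- ensure instance
  have h := (Subgroup.normalClosure_normal (s := {ga * gb * ga * gb})).conj_mem
    _ tEl_mem_K (ga * gd * ga)⁻¹
  rwa [inv_inv] at h

lemma ada_mem : ga * gd * ga ∈ St1 := conj_mem gd_mem

lemma wEl_mem_St1 : wEl ∈ St1 :=
  mul_mem (inv_mem tEl_mem_St1)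
    (mul_mem (mul_mem (inv_mem ada_mem) tEl_mem_St1) ada_mem)

lemma psiG_wEl_f : psiG false wEl = ga * gb * ga * gb := by
  rw [wEl, psiG_mul (inv_mem tEl_mem_St1)
      (mul_mem (mul_mem (inv_mem ada_mem) tEl_mem_St1) ada_mem),
    psiG_mul (mul_mem (inv_mem ada_mem) tEl_mem_St1) ada_mem,
    psiG_mul (inv_mem ada_mem) tEl_mem_St1,
    psiG_inv tEl_mem_St1, psiG_inv ada_mem, psiG_tEl_f, psiG_ada_f]
  -- (gc*ga)⁻¹ * (gb⁻¹ * (gc*ga) * gb) = ga*gb*ga*gb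
  rw [mul_inv_rev, ga_inv, gc_inv, gb_inv]
  have hop : ∀ y : Grigorchuk, gc * (gb * (gc * y)) = gb * y := by
    intro y
    rw [← mul_assoc, gc_gb, ← mul_assoc, gd_gc]
  simp only [mul_assoc]
  rw [hop]

lemma psiG_wEl_t : psiG true wEl = 1 := by
  rw [wEl, psiG_mul (inv_mem tEl_mem_St1)
      (mul_mem (mul_mem (inv_mem ada_mem) tEl_mem_St1) ada_mem),
    psiG_mul (mul_mem (inv_mem ada_mem) tEl_mem_St1) ada_mem,
    psiG_mul (inv_mem ada_mem) tEl_mem_St1,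
    psiG_inv tEl_mem_St1, psiG_inv ada_mem, psiG_tEl_t, psiG_ada_t]
  group

/-! ### `K × K ⊆ ψ(K)` -/

lemma exists_K_psi_left : ∀ k ∈ K, ∃ h ∈ K, psiG false h = k ∧ psiG true h = 1 := by
  intro k hk
  refine Subgroup.closure_induction
    (k := Group.conjugatesOfSet {ga * gb * ga * gb})
    (p := fun x _ => ∃ h ∈ K, psiG false h = x ∧ psiG true h = 1) ?_ ?_ ?_ ?_ hk
  · intro x hx
    rw [Group.mem_conjugatesOfSet_iff] at hx
    obtain ⟨aEl, haEl, hconj⟩ := hx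
    rw [Set.mem_singleton_iff] at haEl
    subst haEl
    obtain ⟨c, hc⟩ := isConj_iff.mp hconj
    obtain ⟨h, hhSt, hh0⟩ := psi0_surj c
    refine ⟨h * wEl * h⁻¹, Subgroup.normalClosure_normal.conj_mem _ wEl_mem_K h, ?_, ?_⟩
    · rw [psiG_mul (mul_mem hhSt (K_le_St1 wEl_mem_K)) (inv_mem hhSt),
        psiG_mul hhSt (K_le_St1 wEl_mem_K), psiG_inv hhSt,
        psiG_wEl_f, hh0]
      exact hc
    · rw [psiG_mul (mul_mem hhSt (K_le_St1 wEl_mem_K)) (inv_mem hhSt),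
        psiG_mul hhSt (K_le_St1 wEl_mem_K), psiG_inv hhSt, psiG_wEl_t]
      group
  · exact ⟨1, one_mem _, psiG_one false, psiG_one true⟩
  · rintro x y _ _ ⟨h, hK, h0, h1⟩ ⟨h', hK', h0', h1'⟩
    refine ⟨h * h', mul_mem hK hK', ?_, ?_⟩
    · rw [psiG_mul (K_le_St1 hK) (K_le_St1 hK'), h0, h0']
    · rw [psiG_mul (K_le_St1 hK) (K_le_St1 hK'), h1, h1', mul_one]
  · rintro x _ ⟨h, hK, h0, h1⟩
    refine ⟨h⁻¹, inv_mem hK, ?_, ?_⟩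
    · rw [psiG_inv (K_le_St1 hK), h0]
    · rw [psiG_inv (K_le_St1 hK), h1, inv_one]

lemma exists_K_psi_right : ∀ k ∈ K, ∃ h ∈ K, psiG false h = 1 ∧ psiG true h = k := by
  intro k hk
  obtain ⟨h, hK, h0, h1⟩ := exists_K_psi_left k hk
  have hmem : ga * h * ga ∈ K := by
    have hc := Subgroup.normalClosure_normal.conj_mem _ hK ga
    rwa [ga_inv] at hc
  refine ⟨ga * h * ga, hmem, ?_, ?_⟩
  · rw [psiG_conj (K_le_St1 hK), show (!false) = true from rfl, h1]
  · rw [psiG_conj (K_le_St1 hK), show (!true) = false from rfl, h0]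

lemma exists_K_psi_pair : ∀ k0 ∈ K, ∀ k1 ∈ K,
    ∃ h ∈ K, psiG false h = k0 ∧ psiG true h = k1 := by
  intro k0 hk0 k1 hk1
  obtain ⟨h, hK, h0, h1⟩ := exists_K_psi_left k0 hk0
  obtain ⟨h', hK', h0', h1'⟩ := exists_K_psi_right k1 hk1
  refine ⟨h * h', mul_mem hK hK', ?_, ?_⟩
  · rw [psiG_mul (K_le_St1 hK) (K_le_St1 hK'), h0, h0', mul_one]
  · rw [psiG_mul (K_le_St1 hK) (K_le_St1 hK'), h1, h1', one_mul]

/-- If `g ∈ St_Γ(1)` and both components of `ψ(g)` lie in `K`, then `g ∈ K`. -/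
lemma mem_K_of_psi {g : Grigorchuk} (hg : g ∈ St1) (h0 : psiG false g ∈ K)
    (h1 : psiG true g ∈ K) : g ∈ K := by
  obtain ⟨h, hK, e0, e1⟩ := exists_K_psi_pair _ h0 _ h1
  have hgh : g * h⁻¹ = 1 := by
    refine psi_inj (mul_mem hg (inv_mem (K_le_St1 hK))) ?_ ?_
    · rw [psiG_mul hg (inv_mem (K_le_St1 hK)), psiG_inv (K_le_St1 hK), e0,
        mul_inv_cancel]
    · rw [psiG_mul hg (inv_mem (K_le_St1 hK)), psiG_inv (K_le_St1 hK), e1,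
        mul_inv_cancel]
  have : g = h := by
    rw [← mul_inv_eq_one]; exact hgh
  exact this ▸ hK

/-! ### Finiteness of `Γ/K` -/

lemma quot_finite : Finite (Grigorchuk ⧸ K) := by
  classical
  set π := QuotientGroup.mk' K with hπ
  set A := π ga with hA
  set B := π gb with hB
  set D := π gd with hD
  have hA2 : A * A = 1 := by rw [hA, ← map_mul, ga_sq, map_one]
  have hB2 : B * B = 1 := by rw [hB, ← map_mul, gb_sq, map_one]
  have hD2 : D * D = 1 := by rw [hD, ← map_mul, gd_sq, map_one]
  have ht : A * B * (A * B) = 1 := by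
    rw [hA, hB, ← map_mul, ← map_mul, ← mul_assoc]
    exact (QuotientGroup.eq_one_iff _).mpr tEl_mem_K
  have bae : B * A = A * B := by
    have h1 : A * B = (A * B)⁻¹ := eq_inv_of_mul_eq_one_left ht
    have hAi : A⁻¹ = A := inv_eq_of_mul_eq_one_right hA2
    have hBi : B⁻¹ = B := inv_eq_of_mul_eq_one_right hB2
    rw [h1, mul_inv_rev, hAi, hBi]
  have bde : B * D = D * B := by
    rw [hB, hD, ← map_mul, ← map_mul, gb_gd, gd_gb]
  have dadae' : D * A * D * A = A * D * A * D := by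
    have := adad_eq
    have h2 : π (gd * ga * gd * ga) = π (ga * gd * ga * gd) := by rw [this]
    simpa only [map_mul, ← hA, ← hD] using h2
  -- operator forms
  have a2 : ∀ x, A * (A * x) = x := fun x => by rw [← mul_assoc, hA2, one_mul]
  have d2 : ∀ x, D * (D * x) = x := fun x => by rw [← mul_assoc, hD2, one_mul]
  have b2 : ∀ x, B * (B * x) = x := fun x => by rw [← mul_assoc, hB2, one_mul]
  have ba : ∀ x, B * (A * x) = A * (B * x) := fun x => by
    rw [← mul_assoc, bae, mul_assoc]
  have bd : ∀ x, B * (D * x) = D * (B * x) := fun x => by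
    rw [← mul_assoc, bde, mul_assoc]
  have dada : ∀ x, D * (A * (D * (A * x))) = A * (D * (A * (D * x))) := fun x => by
    simp only [← mul_assoc]; rw [dadae']
  have dadaee : D * (A * (D * A)) = A * (D * (A * D)) := by
    simp only [← mul_assoc]; rw [dadae']
  set l16 : List (Grigorchuk ⧸ K) :=
    [1, A, D, A*D, D*A, A*(D*A), D*(A*D), A*(D*(A*D)),
     B, A*B, D*B, A*(D*B), D*(A*B), A*(D*(A*B)), D*(A*(D*B)), A*(D*(A*(D*B)))] with hl
  have memA : ∀ q ∈ l16, q * A ∈ l16 := by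
    intro q hq
    simp only [hl, List.mem_cons, List.not_mem_nil, or_false] at hq ⊢
    rcases hq with rfl|rfl|rfl|rfl|rfl|rfl|rfl|rfl|rfl|rfl|rfl|rfl|rfl|rfl|rfl|rfl <;>
      simp [mul_assoc, a2, d2, b2, hA2, hD2, hB2, ba, bae, bd, bde, dada, dadaee]
  have memB : ∀ q ∈ l16, q * B ∈ l16 := by
    intro q hq
    simp only [hl, List.mem_cons, List.not_mem_nil, or_false] at hq ⊢
    rcases hq with rfl|rfl|rfl|rfl|rfl|rfl|rfl|rfl|rfl|rfl|rfl|rfl|rfl|rfl|rfl|rfl <;>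
      simp [mul_assoc, a2, d2, b2, hA2, hD2, hB2, ba, bae, bd, bde, dada, dadaee]
  have memD : ∀ q ∈ l16, q * D ∈ l16 := by
    intro q hq
    simp only [hl, List.mem_cons, List.not_mem_nil, or_false] at hq ⊢
    rcases hq with rfl|rfl|rfl|rfl|rfl|rfl|rfl|rfl|rfl|rfl|rfl|rfl|rfl|rfl|rfl|rfl <;>
      simp [mul_assoc, a2, d2, b2, hA2, hD2, hB2, ba, bae, bd, bde, dada, dadaee]
  have hgc : π gc = B * D := by rw [hB, hD, ← map_mul, gb_gd]
  have cover : ∀ g : Grigorchuk, ∀ q ∈ l16, q * π g ∈ l16 := by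
    refine grig_induction ?_ memA memB ?_ memD ?_ ?_
    · intro q hq; rw [map_one, mul_one]; exact hq
    · intro q hq
      rw [hgc, ← mul_assoc]
      exact memD _ (memB _ hq)
    · intro x y hx hy q hq
      rw [map_mul, ← mul_assoc]
      exact hy _ (hx _ hq)
    · intro x hx q hq
      rw [map_inv]
      have hsub : Finset.image (· * π x) l16.toFinset ⊆ l16.toFinset := by
        intro z hz
        rw [Finset.mem_image] at hz
        obtain ⟨u, hu, rfl⟩ := hz
        exact List.mem_toFinset.mpr (hx u (List.mem_toFinset.mp hu))
      have hinj : Function.Injective (· * π x) := fun u v huv => by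
        simpa using mul_right_cancel huv
      have heq : Finset.image (· * π x) l16.toFinset = l16.toFinset :=
        Finset.eq_of_subset_of_card_le hsub
          (le_of_eq (Finset.card_image_of_injective _ hinj).symm)
      have hq' : q ∈ Finset.image (· * π x) l16.toFinset := by
        rw [heq]; exact List.mem_toFinset.mpr hq
      rw [Finset.mem_image] at hq'
      obtain ⟨u, hu, hu'⟩ := hq'
      have : q * (π x)⁻¹ = u := by rw [← hu', mul_inv_cancel_right]
      rw [this]
      exact List.mem_toFinset.mp hu
  have hall : ∀ q : Grigorchuk ⧸ K, q ∈ l16 := by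
    intro q
    obtain ⟨g, rfl⟩ := QuotientGroup.mk'_surjective K q
    have := cover g 1 (by rw [hl]; exact List.mem_cons_self)
    rwa [one_mul] at this
  have huniv : (Set.univ : Set (Grigorchuk ⧸ K)).Finite :=
    Set.Finite.subset l16.finite_toSet (fun q _ => hall q)
  exact Set.finite_univ_iff.mp huniv

end Grig

/-- **Proposition 2.3 (the subgroup `K` trick).** There are a finite set
`𝓕 ⊆ Γ/K × Γ/K` and a map `ω : 𝓕 → Γ/K` (formalized as a total map, whose values
matter only on `𝓕`) such that: (i) a pair `(g₀,g₁) ∈ Γ × Γ` belongs to the image of `ψ`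
if and only if `(π_K(g₀), π_K(g₁)) ∈ 𝓕`; (ii) whenever `(π_K(g₀), π_K(g₁)) ∈ 𝓕`,
every `g ∈ St_Γ(1)` with `ψ(g) = (g₀,g₁)` satisfies `π_K(g) = ω(π_K(g₀), π_K(g₁))`. -/
theorem Grig.psi_image_via_K :
    ∃ (FF : Set ((Grigorchuk ⧸ K) × (Grigorchuk ⧸ K)))
      (ω : (Grigorchuk ⧸ K) × (Grigorchuk ⧸ K) → Grigorchuk ⧸ K),
      FF.Finite ∧
      (∀ g0 g1 : Grigorchuk,
        (∃ g ∈ St1, psiG false g = g0 ∧ psiG true g = g1) ↔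
          ((QuotientGroup.mk' K) g0, (QuotientGroup.mk' K) g1) ∈ FF) ∧
      (∀ g0 g1 : Grigorchuk,
        ((QuotientGroup.mk' K) g0, (QuotientGroup.mk' K) g1) ∈ FF →
        ∀ g ∈ St1, psiG false g = g0 → psiG true g = g1 →
          (QuotientGroup.mk' K) g = ω ((QuotientGroup.mk' K) g0, (QuotientGroup.mk' K) g1)) := by
  classical
  have hFin : Finite (Grig.Grigorchuk ⧸ Grig.K) := Grig.quot_finite
  set π := QuotientGroup.mk' Grig.K with hπ
  refine ⟨{p | ∃ g ∈ Grig.St1, (π (Grig.psiG false g), π (Grig.psiG true g)) = p},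
    fun p => if h : ∃ g ∈ Grig.St1, (π (Grig.psiG false g), π (Grig.psiG true g)) = p
      then π h.choose else 1, ?_, ?_, ?_⟩
  · exact Set.toFinite _
  · intro g0 g1
    constructor
    · rintro ⟨g, hg, h0, h1⟩
      exact ⟨g, hg, by rw [h0, h1]⟩
    · rintro ⟨h, hh, hp⟩
      have hp0 : π (Grig.psiG false h) = π g0 := congrArg Prod.fst hp
      have hp1 : π (Grig.psiG true h) = π g1 := congrArg Prod.snd hp
      have hk0 : (Grig.psiG false h)⁻¹ * g0 ∈ Grig.K := QuotientGroup.eq.mp hp0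
      have hk1 : (Grig.psiG true h)⁻¹ * g1 ∈ Grig.K := QuotientGroup.eq.mp hp1
      obtain ⟨u, huK, hu0, hu1⟩ := Grig.exists_K_psi_pair _ hk0 _ hk1
      refine ⟨h * u, mul_mem hh (Grig.K_le_St1 huK), ?_, ?_⟩
      · rw [Grig.psiG_mul hh (Grig.K_le_St1 huK), hu0, mul_inv_cancel_left]
      · rw [Grig.psiG_mul hh (Grig.K_le_St1 huK), hu1, mul_inv_cancel_left]
  · intro g0 g1 hFF g hg h0 h1
    subst h0; subst h1
    have hc : ∃ g' ∈ Grig.St1,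
        (π (Grig.psiG false g'), π (Grig.psiG true g'))
          = (π (Grig.psiG false g), π (Grig.psiG true g)) := hFF
    show π g = dite _ _ _
    rw [dif_pos hc]
    have hh : hc.choose ∈ Grig.St1 := hc.choose_spec.1
    have heq := hc.choose_spec.2
    have e0 : π (Grig.psiG false g) = π (Grig.psiG false hc.choose) :=
      (congrArg Prod.fst heq).symm
    have e1 : π (Grig.psiG true g) = π (Grig.psiG true hc.choose) :=
      (congrArg Prod.snd heq).symm
    have hK : g⁻¹ * hc.choose ∈ Grig.K := by
      refine Grig.mem_K_of_psi (mul_mem (inv_mem hg) hh) ?_ ?_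
      · rw [Grig.psiG_mul (inv_mem hg) hh, Grig.psiG_inv hg]
        exact QuotientGroup.eq.mp e0
      · rw [Grig.psiG_mul (inv_mem hg) hh, Grig.psiG_inv hg]
        exact QuotientGroup.eq.mp e1
    exact QuotientGroup.eq.mpr hK
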